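/- arXiv:1711.01492 — 2 statements merged into one kernel-verified Lean document; each statement's English description precedes it below -/
import Mathlib

section
/- (Ghost Lemma) Let T be a triangulated category, F_0 → F_1 → ... → F_{n+1} a sequence of morphisms g_1,...,g_{n+1} with composite g, and P ∈ T an object such that each induced map Hom(P[i], F_{k-1}) → Hom(P[i], F_k) is zero for all i ∈ ℤ and all k = 1,...,n+1. Then for every object Q in ⟨P⟩_n (the thick n-step generation closure of P), the induced map Hom(Q[i], F_0) → Hom(Q[i], F_{n+1}) is zero for all i. -/
open CategoryTheory CategoryTheory.Limits CategoryTheory.Pretriangulated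

universe v u

variable {C : Type u} [Category.{v} C] [Preadditive C] [HasZeroObject C]
  [HasShift C ℤ] [∀ n : ℤ, (shiftFunctor C n).Additive] [Pretriangulated C]

/-- The objects of `[G]₀`: finite direct sums of shifts of `G` (up to isomorphism). -/
inductive GenZero (G : C) : C → Prop
  | shift (n : ℤ) (X : C) : Nonempty (X ≅ (shiftFunctor C n).obj G) → GenZero G X
  | zero (X : C) : IsZero X → GenZero G X
  | sum {X Y : C} (Z : C) (b : BinaryBicone X Y) :
      Nonempty b.IsBilimit → Nonempty (Z ≅ b.pt) →
      GenZero G X → GenZero G Y → GenZero G Z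

/-- The objects of `[G]ₙ`: objects obtained from `G` in `n` cone-steps, i.e. `F ∈ [G]ₖ`
iff there is a distinguished triangle `F_{k-1} → F → F₀ → F_{k-1}[1]` with
`F₀ ∈ [G]₀` and `F_{k-1} ∈ [G]_{k-1}`. -/
def Gen (G : C) : ℕ → C → Prop
  | 0 => GenZero G
  | (k+1) => fun X => ∃ (Y Z : C) (f : Y ⟶ X) (g : X ⟶ Z)
      (h : Z ⟶ (shiftFunctor C (1 : ℤ)).obj Y),
      Gen G k Y ∧ GenZero G Z ∧ Triangle.mk f g h ∈ distTriang C

/-- The objects of `⟨G⟩ₙ`, the idempotent closure of `[G]ₙ`: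
direct summands of objects of `[G]ₙ`. -/
def ThickGen (G : C) (n : ℕ) (X : C) : Prop :=
  ∃ (X' : C) (b : BinaryBicone X X'), Nonempty b.IsBilimit ∧ Gen G n b.pt

/-- The composite `F 0 ⟶ F m` of a chain of morphisms `g k : F k ⟶ F (k+1)`. -/
def chainComp (F : ℕ → C) (g : ∀ k, F k ⟶ F (k + 1)) : ∀ m, F 0 ⟶ F m
  | 0 => 𝟙 _
  | (m + 1) => chainComp F g m ≫ g m

/-- A map from a shift of an object of `[P]₀` composed with a `P`-ghost map vanishes. -/
lemma genZero_ghost {P : C} {F₀ F₁ : C} (u : F₀ ⟶ F₁)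
    (hu : ∀ (i : ℤ) (φ : (shiftFunctor C i).obj P ⟶ F₀), φ ≫ u = 0)
    {X : C} (hX : GenZero P X) :
    ∀ (i : ℤ) (ψ : (shiftFunctor C i).obj X ⟶ F₀), ψ ≫ u = 0 := by
  induction hX with
  | shift n X he =>
    intro i ψ
    obtain ⟨e⟩ := he
    have key : (((shiftFunctorAdd C n i).app P).hom ≫ (shiftFunctor C i).map e.inv ≫ ψ) ≫ u
        = 0 := hu (n + i) _
    have hψ : ψ = (shiftFunctor C i).map e.hom ≫ ((shiftFunctorAdd C n i).app P).inv ≫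
        (((shiftFunctorAdd C n i).app P).hom ≫ (shiftFunctor C i).map e.inv ≫ ψ) := by
      simp [← Functor.map_comp_assoc]
    rw [hψ]
    simp only [Category.assoc] at key ⊢
    rw [key, comp_zero, comp_zero]
  | zero X hz =>
    intro i ψ
    have : IsZero ((shiftFunctor C i).obj X) := (shiftFunctor C i).map_isZero hz
    rw [this.eq_of_src ψ 0, zero_comp]
  | sum Z b hb he _ _ ihX ihY =>
    intro i ψ
    obtain ⟨e⟩ := he
    obtain ⟨hbil⟩ := hb
    have htot : b.fst ≫ b.inl + b.snd ≫ b.inr = 𝟙 b.pt :=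
      CategoryTheory.Limits.IsBilimit.binary_total hbil
    obtain ⟨m, hm⟩ : ∃ m, m = (shiftFunctor C i).map e.inv ≫ ψ := ⟨_, rfl⟩
    have hψ : ψ = (shiftFunctor C i).map e.hom ≫ m := by
      rw [hm, ← Functor.map_comp_assoc, e.hom_inv_id, CategoryTheory.Functor.map_id,
        Category.id_comp]
    have hmu : m ≫ u = 0 := by
      have hsplit : m = (shiftFunctor C i).map b.fst ≫ ((shiftFunctor C i).map b.inl ≫ m) +
          (shiftFunctor C i).map b.snd ≫ ((shiftFunctor C i).map b.inr ≫ m) := by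
        rw [← Functor.map_comp_assoc, ← Functor.map_comp_assoc, ← Preadditive.add_comp,
          ← Functor.map_add, htot, CategoryTheory.Functor.map_id, Category.id_comp]
      have h1 := ihX i ((shiftFunctor C i).map b.inl ≫ m)
      have h2 := ihY i ((shiftFunctor C i).map b.inr ≫ m)
      rw [hsplit, Preadditive.add_comp]
      simp only [Category.assoc] at h1 h2 ⊢
      rw [h1, h2, comp_zero, comp_zero, add_zero]
    rw [hψ, Category.assoc, hmu, comp_zero]

/-- A map from a shift of an object of `[P]ₙ` composed with `n + 1` `P`-ghost maps vanishes. -/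
lemma gen_ghost {P : C} (F : ℕ → C) (g : ∀ k, F k ⟶ F (k + 1)) :
    ∀ (n : ℕ) (X : C), Gen P n X →
    (∀ k, k < n + 1 → ∀ (i : ℤ) (φ : (shiftFunctor C i).obj P ⟶ F k), φ ≫ g k = 0) →
    ∀ (i : ℤ) (ψ : (shiftFunctor C i).obj X ⟶ F 0), ψ ≫ chainComp F g (n + 1) = 0 := by
  intro n
  induction n with
  | zero =>
    intro X hX hg i ψ
    have : chainComp F g 1 = 𝟙 (F 0) ≫ g 0 := rfl
    rw [this, Category.id_comp]
    exact genZero_ghost (g 0) (fun j φ => hg 0 (by omega) j φ) hX i ψ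
  | succ n ih =>
    intro X hX hg i ψ
    obtain ⟨Y, Z, f, q, h, hY, hZ, hT⟩ := hX
    -- shift the triangle by i
    have hT' := Pretriangulated.Triangle.shift_distinguished _ hT i
    set T' := (CategoryTheory.shiftFunctor (Triangle C) i).obj (Triangle.mk f q h) with hT'def
    have hmor₁ : T'.mor₁ = i.negOnePow • (shiftFunctor C i).map f := rfl
    have hmor₂ : T'.mor₂ = i.negOnePow • (shiftFunctor C i).map q := rfl
    -- the composite up to stage n+1 kills the Y-part
    have h1 : T'.mor₁ ≫ (ψ ≫ chainComp F g (n + 1)) = 0 := by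
      show (i.negOnePow • (shiftFunctor C i).map f) ≫ (ψ ≫ chainComp F g (n + 1)) = 0
      rw [Linear.units_smul_comp, ← Category.assoc,
        ih Y hY (fun k hk j φ => hg k (by omega) j φ) i ((shiftFunctor C i).map f ≫ ψ),
        smul_zero]
    obtain ⟨φ, hφ⟩ := Pretriangulated.Triangle.yoneda_exact₂ T' hT' _ h1
    have hφ0 : φ ≫ g (n + 1) = 0 :=
      genZero_ghost (g (n + 1)) (fun j ξ => hg (n + 1) (by omega) j ξ) hZ i φ
    have : chainComp F g (n + 1 + 1) = chainComp F g (n + 1) ≫ g (n + 1) := rfl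
    rw [this, ← Category.assoc]
    exact (congrArg (· ≫ g (n + 1)) hφ).trans (by simp only [Category.assoc, hφ0, comp_zero]; rfl)

/-- Ghost Lemma: if each `g k : F k ⟶ F (k+1)` (`k = 0, …, n`) kills all maps from
shifts of `P`, then the composite `F 0 ⟶ F (n+1)` kills all maps from shifts of any
object `Q` of `⟨P⟩ₙ`. -/
theorem ghost_lemma {P : C} {n : ℕ} (F : ℕ → C) (g : ∀ k, F k ⟶ F (k + 1))
    (hghost : ∀ k, k < n + 1 → ∀ (i : ℤ) (φ : (shiftFunctor C i).obj P ⟶ F k),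
      φ ≫ g k = 0)
    (Q : C) (hQ : ThickGen P n Q) (i : ℤ) (ψ : (shiftFunctor C i).obj Q ⟶ F 0) :
    ψ ≫ chainComp F g (n + 1) = 0 := by
  obtain ⟨Q', b, _, hgen⟩ := hQ
  have hψ : ψ = (shiftFunctor C i).map b.inl ≫ ((shiftFunctor C i).map b.fst ≫ ψ) := by
    rw [← Functor.map_comp_assoc, b.inl_fst, CategoryTheory.Functor.map_id, Category.id_comp]
  rw [hψ, Category.assoc,
    gen_ghost F g n b.pt hgen hghost i ((shiftFunctor C i).map b.fst ≫ ψ), comp_zero]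
end

section
/- Let R be a commutative Noetherian ring, f ∈ R, and M an object of D(R-Mod) such that M ∈_f ⟨R⟩_n, meaning: there exists M' and a distinguished triangle P → M ⊕ M' → C → P[1] with P ∈ [R]_n and f·C = 0 (f annihilates C as an object of the derived category). Then for any R-modules S_0,...,S_{n+1} and morphisms θ_k : S_{k-1} → S_k[1] in D(R-Mod) (k=1,...,n+1), the image of the composite map Hom(M,S_0) → Hom(M, S_{n+1}[n+1]) induced by θ_{n+1}∘...∘θ_1 is annihilated by f. -/
open CategoryTheory CategoryTheory.Limits CategoryTheory.Pretriangulated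

universe v u

variable {C : Type u} [Category.{v} C] [Preadditive C] [HasZeroObject C]
  [HasShift C ℤ] [∀ n : ℤ, (shiftFunctor C n).Additive] [Pretriangulated C]

section

variable (R : Type u) [CommRing R] [IsNoetherianRing R]
  [HasDerivedCategory (ModuleCat.{u} R)]

open DerivedCategory

/-- The `R`-module `N` viewed as an object of the derived category `D(R-Mod)`. -/
noncomputable abbrev sObj (N : ModuleCat.{u} R) : DerivedCategory (ModuleCat.{u} R) :=
  (DerivedCategory.singleFunctor (ModuleCat.{u} R) 0).obj N

/-- `M ∈_f ⟨R⟩ₙ` : there are `M'` and a distinguished triangle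
`P → M ⊕ M' → C → P[1]` with `P ∈ [R]ₙ` and `f · C = 0`. -/
def FApprox (f : R) (n : ℕ) (X : DerivedCategory (ModuleCat.{u} R)) : Prop :=
  ∃ (X' : DerivedCategory (ModuleCat.{u} R)) (b : BinaryBicone X X')
    (_ : Nonempty b.IsBilimit)
    (P : DerivedCategory (ModuleCat.{u} R)) (_ : Gen (sObj R (ModuleCat.of R R)) n P)
    (KC : CochainComplex (ModuleCat.{u} R) ℤ)
    (u : P ⟶ b.pt) (v : b.pt ⟶ DerivedCategory.Q.obj KC)
    (w : DerivedCategory.Q.obj KC ⟶ (shiftFunctor _ (1 : ℤ)).obj P),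
    (Triangle.mk u v w ∈ distTriang (DerivedCategory (ModuleCat.{u} R))) ∧
      DerivedCategory.Q.map (f • 𝟙 KC) = 0

/-- The composite `S 0 ⟶ (S m)[m]` of a chain of degree-one morphisms
`θ k : S k ⟶ (S (k+1))[1]` between modules in the derived category. -/
noncomputable def thetaChain (S : ℕ → ModuleCat.{u} R)
    (θ : ∀ k, sObj R (S k) ⟶
      (shiftFunctor (DerivedCategory (ModuleCat.{u} R)) (1 : ℤ)).obj (sObj R (S (k + 1)))) :
    ∀ m : ℕ, sObj R (S 0) ⟶
      (shiftFunctor (DerivedCategory (ModuleCat.{u} R)) ((m : ℕ) : ℤ)).obj (sObj R (S m))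
  | 0 => (shiftFunctorZero' (DerivedCategory (ModuleCat.{u} R)) (((0 : ℕ) : ℤ))
      (by simp)).inv.app _
  | (m + 1) => thetaChain S θ m ≫
      (shiftFunctor (DerivedCategory (ModuleCat.{u} R)) ((m : ℤ))).map (θ m) ≫
      (shiftFunctorAdd' (DerivedCategory (ModuleCat.{u} R)) (1 : ℤ) ((m : ℕ) : ℤ)
        (((m + 1 : ℕ) : ℤ)) (by push_cast; ring)).inv.app _


/-! ### Auxiliary lemmas -/

section Aux

set_option linter.unusedSectionVars false

lemma quotient_map_eq_zero_of_isZero_homology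
    (Y : CochainComplex (ModuleCat.{u} R) ℤ) (hY : IsZero (Y.homology 0))
    (f : (HomologicalComplex.single (ModuleCat.{u} R) (ComplexShape.up ℤ) 0).obj
        (ModuleCat.of R R) ⟶ Y) :
    (HomotopyCategory.quotient (ModuleCat.{u} R) (ComplexShape.up ℤ)).map f = 0 := by
  have hE : (Y.sc 0).Exact := by
    rw [← HomologicalComplex.exactAt_iff, HomologicalComplex.exactAt_iff_isZero_homology]
    exact hY
  let e0 := HomologicalComplex.singleObjXSelf (ComplexShape.up ℤ) 0 (ModuleCat.of R R)
  let x : (Y.X 0 : Type u) := (f.f 0) (e0.inv (1 : R))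
  have hd : f.f 0 ≫ Y.d 0 ((ComplexShape.up ℤ).next 0) = 0 := by
    rw [f.comm 0 ((ComplexShape.up ℤ).next 0), HomologicalComplex.single_obj_d, zero_comp]
  have hgx : (Y.sc 0).g x = 0 := by
    have h' : (Y.sc 0).g x = (f.f 0 ≫ Y.d 0 ((ComplexShape.up ℤ).next 0)) (e0.inv (1 : R)) := rfl
    rw [h', hd]
    rfl
  obtain ⟨y, hy⟩ := (ShortComplex.moduleCat_exact_iff _).1 hE x hgx
  let σ : ((HomologicalComplex.single (ModuleCat.{u} R) (ComplexShape.up ℤ) 0).obj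
        (ModuleCat.of R R)).X 0 ⟶ Y.X ((ComplexShape.up ℤ).prev 0) :=
    e0.hom ≫ ModuleCat.ofHom (LinearMap.toSpanSingleton R (Y.X ((ComplexShape.up ℤ).prev 0)) y)
  have key : (ModuleCat.ofHom (LinearMap.toSpanSingleton R (Y.X ((ComplexShape.up ℤ).prev 0)) y)
        : ModuleCat.of R R ⟶ Y.X ((ComplexShape.up ℤ).prev 0)) ≫
        Y.d ((ComplexShape.up ℤ).prev 0) 0 = e0.inv ≫ f.f 0 := by
    apply ModuleCat.hom_ext
    apply LinearMap.ext_ring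
    show Y.d ((ComplexShape.up ℤ).prev 0) 0 ((LinearMap.toSpanSingleton R _ y) (1 : R)) =
      f.f 0 (e0.inv (1 : R))
    rw [LinearMap.toSpanSingleton_apply, one_smul]
    exact hy
  have hσ : σ ≫ Y.d ((ComplexShape.up ℤ).prev 0) 0 = f.f 0 := by
    dsimp only [σ]
    rw [Category.assoc, key, Iso.hom_inv_id_assoc]
  let hfun : ∀ i j, ((HomologicalComplex.single (ModuleCat.{u} R) (ComplexShape.up ℤ) 0).obj
      (ModuleCat.of R R)).X i ⟶ Y.X j := fun i j =>
    if h : i = 0 ∧ j = (ComplexShape.up ℤ).prev 0 then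
      eqToHom (congrArg _ h.1) ≫ σ ≫ eqToHom (congrArg Y.X h.2.symm)
    else 0
  have H : Homotopy f 0 := {
    hom := hfun
    zero := fun i j hij => by
      show dite _ _ _ = _
      rw [dif_neg]
      rintro ⟨rfl, rfl⟩
      exact hij (by simp only [CochainComplex.prev, ComplexShape.up_Rel]; omega)
    comm := fun i => by
      by_cases hi : i = 0
      · subst hi
        have h1 : (dNext 0) hfun = 0 := by
          show ((HomologicalComplex.single (ModuleCat.{u} R) (ComplexShape.up ℤ) 0).obj
            (ModuleCat.of R R)).d 0 _ ≫ _ = 0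
          rw [HomologicalComplex.single_obj_d, zero_comp]
        have h2 : (prevD 0) hfun = σ ≫ Y.d ((ComplexShape.up ℤ).prev 0) 0 := by
          show hfun 0 ((ComplexShape.up ℤ).prev 0) ≫ Y.d _ 0 = _
          show dite _ _ _ ≫ _ = _
          rw [dif_pos ⟨rfl, rfl⟩]
          simp
        rw [h1, h2, hσ]
        simp
      · apply (HomologicalComplex.isZero_single_obj_X
          (ComplexShape.up ℤ) 0 (ModuleCat.of R R) i hi).eq_of_src }
  calc (HomotopyCategory.quotient (ModuleCat.{u} R) (ComplexShape.up ℤ)).map f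
      = (HomotopyCategory.quotient (ModuleCat.{u} R) (ComplexShape.up ℤ)).map 0 :=
        HomotopyCategory.eq_of_homotopy _ _ H
    _ = 0 := Functor.map_zero _ _ _

lemma hom_single_shift_eq_zero (N : ModuleCat.{u} R) (e : ℤ) (he : e ≠ 0)
    (h : sObj R (ModuleCat.of R R) ⟶
      (shiftFunctor (DerivedCategory (ModuleCat.{u} R)) e).obj (sObj R N)) : h = 0 := by
  let Qt := HomotopyCategory.quotient (ModuleCat.{u} R) (ComplexShape.up ℤ)
  let SM := (HomologicalComplex.single (ModuleCat.{u} R) (ComplexShape.up ℤ) 0).obj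
      (ModuleCat.of R R)
  let SN := (HomologicalComplex.single (ModuleCat.{u} R) (ComplexShape.up ℤ) 0).obj N
  let α : (shiftFunctor (DerivedCategory (ModuleCat.{u} R)) e).obj (Qh.obj (Qt.obj SN)) ⟶
      Qh.obj ((shiftFunctor (HomotopyCategory (ModuleCat.{u} R) (ComplexShape.up ℤ)) e).obj
        (Qt.obj SN)) :=
    ((Qh.commShiftIso e).app (Qt.obj SN)).inv
  let β : Qh.obj ((shiftFunctor (HomotopyCategory (ModuleCat.{u} R) (ComplexShape.up ℤ)) e).obj
        (Qt.obj SN)) ⟶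
      Qh.obj (Qt.obj ((shiftFunctor (CochainComplex (ModuleCat.{u} R) ℤ) e).obj SN)) :=
    Qh.map ((Qt.commShiftIso e).app SN).inv
  have hβ : IsIso β := by dsimp only [β]; infer_instance
  have hα : IsIso α := by dsimp only [α]; infer_instance
  suffices hs : (h ≫ α) ≫ β = 0 by
    have h1 : h ≫ α = 0 := by
      rw [← cancel_mono β, hs, zero_comp]
    exact (cancel_mono α).1 (h1.trans zero_comp.symm)
  set h' : Qh.obj (Qt.obj SM) ⟶
      Qh.obj (Qt.obj ((shiftFunctor (CochainComplex (ModuleCat.{u} R) ℤ) e).obj SN)) :=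
    (h ≫ α) ≫ β with hh'
  obtain ⟨φ, hφ⟩ := Localization.exists_leftFraction Qh
    ((HomotopyCategory.subcategoryAcyclic (ModuleCat.{u} R)).trW) h'
  have hsQ : HomotopyCategory.quasiIso (ModuleCat.{u} R) (ComplexShape.up ℤ) φ.s := by
    rw [HomotopyCategory.quasiIso_eq_subcategoryAcyclic_W]
    exact φ.hs
  have hq0 : IsIso ((HomotopyCategory.homologyFunctor (ModuleCat.{u} R)
      (ComplexShape.up ℤ) 0).map φ.s) := hsQ 0
  have hzX : IsZero (((shiftFunctor (CochainComplex (ModuleCat.{u} R) ℤ) e).obj SN).X 0) :=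
    HomologicalComplex.isZero_single_obj_X (ComplexShape.up ℤ) 0 N (0 + e) (by omega)
  have hex : ((shiftFunctor (CochainComplex (ModuleCat.{u} R) ℤ) e).obj SN).ExactAt 0 := by
    rw [HomologicalComplex.exactAt_iff]
    exact ShortComplex.exact_of_isZero_X₂ _ hzX
  have hz1 : IsZero (((shiftFunctor (CochainComplex (ModuleCat.{u} R) ℤ) e).obj SN).homology 0) :=
    (HomologicalComplex.exactAt_iff_isZero_homology _ _).1 hex
  have hz2 : IsZero ((HomotopyCategory.homologyFunctor (ModuleCat.{u} R)
      (ComplexShape.up ℤ) 0).obj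
      (Qt.obj ((shiftFunctor (CochainComplex (ModuleCat.{u} R) ℤ) e).obj SN))) :=
    hz1.of_iso ((HomotopyCategory.homologyFunctorFactors (ModuleCat.{u} R)
      (ComplexShape.up ℤ) 0).app _)
  have hzY : IsZero ((HomotopyCategory.homologyFunctor (ModuleCat.{u} R)
      (ComplexShape.up ℤ) 0).obj φ.Y') :=
    hz2.of_iso (asIso ((HomotopyCategory.homologyFunctor (ModuleCat.{u} R)
      (ComplexShape.up ℤ) 0).map φ.s)).symm
  have hzYas : IsZero ((φ.Y'.as).homology 0) :=
    hzY.of_iso ((HomotopyCategory.homologyFunctorFactors (ModuleCat.{u} R)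
      (ComplexShape.up ℤ) 0).app φ.Y'.as).symm
  obtain ⟨f₀, hf₀⟩ := Qt.map_surjective (show Qt.obj SM ⟶ Qt.obj φ.Y'.as from φ.f)
  have hf0 : Qt.map f₀ = 0 := quotient_map_eq_zero_of_isZero_homology R φ.Y'.as hzYas f₀
  have hφf : φ.f = 0 := by
    have h2 : φ.f = Qt.map f₀ := hf₀.symm
    exact h2.trans hf0
  have hmap : h' ≫ Qh.map φ.s = 0 := by
    rw [hφ, MorphismProperty.LeftFraction.map_comp_map_s, hφf, Functor.map_zero]
  have : IsIso (Qh.map φ.s) :=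
    Localization.inverts Qh ((HomotopyCategory.subcategoryAcyclic (ModuleCat.{u} R)).trW) φ.s φ.hs
  show h' = 0
  rw [← cancel_mono (Qh.map φ.s), hmap, zero_comp]

lemma hom_shift_single_shift_eq_zero (N : ModuleCat.{u} R) (j d : ℤ) (hd : d ≠ j)
    (g : (shiftFunctor (DerivedCategory (ModuleCat.{u} R)) j).obj (sObj R (ModuleCat.of R R)) ⟶
      (shiftFunctor (DerivedCategory (ModuleCat.{u} R)) d).obj (sObj R N)) : g = 0 := by
  have h0 : (shiftFunctorCompIsoId (DerivedCategory (ModuleCat.{u} R)) j (-j)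
        (by ring)).inv.app (sObj R (ModuleCat.of R R)) ≫
      (shiftFunctor (DerivedCategory (ModuleCat.{u} R)) (-j)).map g ≫
      (shiftFunctorAdd' (DerivedCategory (ModuleCat.{u} R)) d (-j) (d + -j) rfl).inv.app
        (sObj R N) = 0 :=
    hom_single_shift_eq_zero R N (d + -j) (by omega) _
  have h2 : (shiftFunctor (DerivedCategory (ModuleCat.{u} R)) (-j)).map g ≫
      (shiftFunctorAdd' (DerivedCategory (ModuleCat.{u} R)) d (-j) (d + -j) rfl).inv.app
        (sObj R N) = 0 := by
    rw [← cancel_epi ((shiftFunctorCompIsoId (DerivedCategory (ModuleCat.{u} R)) j (-j)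
      (by ring)).inv.app (sObj R (ModuleCat.of R R))), comp_zero]
    exact h0
  have h1 : (shiftFunctor (DerivedCategory (ModuleCat.{u} R)) (-j)).map g = 0 := by
    rw [← cancel_mono ((shiftFunctorAdd' (DerivedCategory (ModuleCat.{u} R)) d (-j) (d + -j)
      rfl).inv.app (sObj R N)), zero_comp]
    exact h2
  exact (shiftFunctor (DerivedCategory (ModuleCat.{u} R)) (-j)).map_injective
    (by rw [h1, Functor.map_zero])



/-! ### The chain of ghost maps -/

/-- One step of the chain. -/
noncomputable def stepMap (S : ℕ → ModuleCat.{u} R)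
    (θ : ∀ k, sObj R (S k) ⟶
      (shiftFunctor (DerivedCategory (ModuleCat.{u} R)) (1 : ℤ)).obj (sObj R (S (k + 1))))
    (m : ℕ) :
    (shiftFunctor (DerivedCategory (ModuleCat.{u} R)) ((m : ℕ) : ℤ)).obj (sObj R (S m)) ⟶
      (shiftFunctor (DerivedCategory (ModuleCat.{u} R)) (((m + 1 : ℕ)) : ℤ)).obj
        (sObj R (S (m + 1))) :=
  (shiftFunctor (DerivedCategory (ModuleCat.{u} R)) ((m : ℤ))).map (θ m) ≫
    (shiftFunctorAdd' (DerivedCategory (ModuleCat.{u} R)) (1 : ℤ) ((m : ℕ) : ℤ)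
      (((m + 1 : ℕ) : ℤ)) (by push_cast; ring)).inv.app _

lemma thetaChain_succ (S : ℕ → ModuleCat.{u} R)
    (θ : ∀ k, sObj R (S k) ⟶
      (shiftFunctor (DerivedCategory (ModuleCat.{u} R)) (1 : ℤ)).obj (sObj R (S (k + 1))))
    (m : ℕ) :
    thetaChain R S θ (m + 1) = thetaChain R S θ m ≫ stepMap R S θ m := rfl

lemma sObj_shift_congr (S : ℕ → ModuleCat.{u} R) {a b : ℕ} (h : a = b) :
    (shiftFunctor (DerivedCategory (ModuleCat.{u} R)) ((a : ℕ) : ℤ)).obj (sObj R (S a)) =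
      (shiftFunctor (DerivedCategory (ModuleCat.{u} R)) ((b : ℕ) : ℤ)).obj (sObj R (S b)) := by
  rw [h]

/-- The composite of the ghost maps from position `m` to position `m + j`. -/
noncomputable def chainFrom (S : ℕ → ModuleCat.{u} R)
    (θ : ∀ k, sObj R (S k) ⟶
      (shiftFunctor (DerivedCategory (ModuleCat.{u} R)) (1 : ℤ)).obj (sObj R (S (k + 1))))
    (m : ℕ) :
    ∀ j : ℕ,
      (shiftFunctor (DerivedCategory (ModuleCat.{u} R)) ((m : ℕ) : ℤ)).obj (sObj R (S m)) ⟶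
        (shiftFunctor (DerivedCategory (ModuleCat.{u} R)) (((m + j : ℕ)) : ℤ)).obj
          (sObj R (S (m + j)))
  | 0 => 𝟙 _
  | j + 1 => chainFrom S θ m j ≫ stepMap R S θ (m + j)

lemma chainFrom_zero (S : ℕ → ModuleCat.{u} R)
    (θ : ∀ k, sObj R (S k) ⟶
      (shiftFunctor (DerivedCategory (ModuleCat.{u} R)) (1 : ℤ)).obj (sObj R (S (k + 1))))
    (m : ℕ) : chainFrom R S θ m 0 = 𝟙 _ := rfl

lemma chainFrom_succ (S : ℕ → ModuleCat.{u} R)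
    (θ : ∀ k, sObj R (S k) ⟶
      (shiftFunctor (DerivedCategory (ModuleCat.{u} R)) (1 : ℤ)).obj (sObj R (S (k + 1))))
    (m j : ℕ) :
    chainFrom R S θ m (j + 1) = chainFrom R S θ m j ≫ stepMap R S θ (m + j) := rfl

lemma stepMap_congr (S : ℕ → ModuleCat.{u} R)
    (θ : ∀ k, sObj R (S k) ⟶
      (shiftFunctor (DerivedCategory (ModuleCat.{u} R)) (1 : ℤ)).obj (sObj R (S (k + 1))))
    {a b : ℕ} (h : a = b) :
    stepMap R S θ a ≫ eqToHom (sObj_shift_congr R S (congrArg Nat.succ h)) =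
      eqToHom (sObj_shift_congr R S h) ≫ stepMap R S θ b := by
  subst h
  simp

lemma thetaChain_eq_chainFrom (S : ℕ → ModuleCat.{u} R)
    (θ : ∀ k, sObj R (S k) ⟶
      (shiftFunctor (DerivedCategory (ModuleCat.{u} R)) (1 : ℤ)).obj (sObj R (S (k + 1))))
    (m : ℕ) :
    thetaChain R S θ m = thetaChain R S θ 0 ≫ chainFrom R S θ 0 m ≫
      eqToHom (sObj_shift_congr R S (Nat.zero_add m)) := by
  induction m with
  | zero => simp [chainFrom_zero]
  | succ m ih =>
      rw [thetaChain_succ, ih, chainFrom_succ]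
      simp only [Category.assoc]
      congr 1
      congr 1
      rw [← stepMap_congr R S θ (Nat.zero_add m)]

/-! ### The ghost lemma -/

lemma ghostZero (S : ℕ → ModuleCat.{u} R)
    (θ : ∀ k, sObj R (S k) ⟶
      (shiftFunctor (DerivedCategory (ModuleCat.{u} R)) (1 : ℤ)).obj (sObj R (S (k + 1))))
    {P : DerivedCategory (ModuleCat.{u} R)}
    (hP : GenZero (sObj R (ModuleCat.of R R)) P) :
    ∀ (m : ℕ) (ψ : P ⟶ (shiftFunctor (DerivedCategory (ModuleCat.{u} R))
      ((m : ℕ) : ℤ)).obj (sObj R (S m))), ψ ≫ stepMap R S θ m = 0 := by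
  induction hP with
  | shift j X he =>
      obtain ⟨e⟩ := he
      intro m ψ
      by_cases hj : j = ((m : ℕ) : ℤ)
      · have h0 : (e.inv ≫ ψ) ≫ stepMap R S θ m = 0 := by
          apply hom_shift_single_shift_eq_zero R (S (m + 1)) j (((m + 1 : ℕ)) : ℤ)
          rw [hj]
          push_cast
          omega
        have heq : ψ ≫ stepMap R S θ m = e.hom ≫ (e.inv ≫ ψ) ≫ stepMap R S θ m := by
          simp
        rw [heq, h0, comp_zero]
      · have h0 : e.inv ≫ ψ = 0 :=
          hom_shift_single_shift_eq_zero R (S m) j ((m : ℕ) : ℤ) (fun h => hj h.symm) _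
        have heq : ψ ≫ stepMap R S θ m = e.hom ≫ (e.inv ≫ ψ) ≫ stepMap R S θ m := by simp
        rw [heq, h0, zero_comp, comp_zero]
  | zero X hX =>
      intro m ψ
      rw [hX.eq_of_src ψ 0, zero_comp]
  | sum Z b hb he hX hY ihX ihY =>
      obtain ⟨hb⟩ := hb
      obtain ⟨e⟩ := he
      intro m ψ
      have h1 : b.inl ≫ (e.inv ≫ ψ) ≫ stepMap R S θ m = 0 := by
        have := ihX m (b.inl ≫ e.inv ≫ ψ)
        simpa [Category.assoc] using this
      have h2 : b.inr ≫ (e.inv ≫ ψ) ≫ stepMap R S θ m = 0 := by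
        have := ihY m (b.inr ≫ e.inv ≫ ψ)
        simpa [Category.assoc] using this
      have h3 : (e.inv ≫ ψ) ≫ stepMap R S θ m = 0 := by
        apply hb.isColimit.hom_ext
        rintro ⟨⟨⟩⟩
        · simpa using h1
        · simpa using h2
      have heq : ψ ≫ stepMap R S θ m = e.hom ≫ (e.inv ≫ ψ) ≫ stepMap R S θ m := by simp
      rw [heq, h3, comp_zero]

lemma ghost (S : ℕ → ModuleCat.{u} R)
    (θ : ∀ k, sObj R (S k) ⟶
      (shiftFunctor (DerivedCategory (ModuleCat.{u} R)) (1 : ℤ)).obj (sObj R (S (k + 1)))) :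
    ∀ (n : ℕ) {P : DerivedCategory (ModuleCat.{u} R)}
      (_ : Gen (sObj R (ModuleCat.of R R)) n P) (m : ℕ)
      (ψ : P ⟶ (shiftFunctor (DerivedCategory (ModuleCat.{u} R))
        ((m : ℕ) : ℤ)).obj (sObj R (S m))), ψ ≫ chainFrom R S θ m (n + 1) = 0 := by
  intro n
  induction n with
  | zero =>
      intro P hP m ψ
      have hP' : GenZero (sObj R (ModuleCat.of R R)) P := hP
      rw [chainFrom_succ, chainFrom_zero, Category.id_comp]
      exact ghostZero R S θ hP' m ψ
  | succ n ih =>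
      rintro P ⟨Y, Z, u, v, w, hY, hZ, hT⟩ m ψ
      have h1 : u ≫ (ψ ≫ chainFrom R S θ m (n + 1)) = 0 := by
        have := ih hY m (u ≫ ψ)
        simpa [Category.assoc] using this
      obtain ⟨g, hg⟩ := Pretriangulated.Triangle.yoneda_exact₂ _ hT
        (ψ ≫ chainFrom R S θ m (n + 1)) h1
      change Z ⟶ _ at g
      have hg' : ψ ≫ chainFrom R S θ m (n + 1) = v ≫ g := hg
      rw [chainFrom_succ, ← Category.assoc, hg']
      have h2 : g ≫ stepMap R S θ (m + (n + 1)) = 0 := ghostZero R S θ hZ (m + (n + 1)) g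
      change (v ≫ g) ≫ _ = 0
      rw [Category.assoc, h2, comp_zero]

end Aux

/-- If `M ∈_f ⟨R⟩ₙ` in `D(R-Mod)`, then for any `R`-modules `S_0, …, S_{n+1}` and any
morphisms `θ_k : S_{k-1} → S_k[1]`, the image of
`Hom(M, S_0) → Hom(M, S_{n+1}[n+1])` induced by the composite `θ_{n+1} ∘ ⋯ ∘ θ_1`
is annihilated by `f` (multiplication by `f` being induced by `f • 𝟙` on a complex
representing `M`). -/
theorem f_annihilates_image (f : R) (n : ℕ) (K : CochainComplex (ModuleCat.{u} R) ℤ)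
    (hM : FApprox R f n (DerivedCategory.Q.obj K))
    (S : ℕ → ModuleCat.{u} R)
    (θ : ∀ k, sObj R (S k) ⟶
      (shiftFunctor (DerivedCategory (ModuleCat.{u} R)) (1 : ℤ)).obj (sObj R (S (k + 1))))
    (φ : DerivedCategory.Q.obj K ⟶ sObj R (S 0)) :
    DerivedCategory.Q.map (f • 𝟙 K) ≫ φ ≫ thetaChain R S θ (n + 1) = 0 := by
  obtain ⟨X', b, ⟨hb⟩, P, hP, KC, u, v, w, hT, hf⟩ := hM
  -- the natural endomorphism of the identity functor induced by multiplication by `f`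
  let τ : (DerivedCategory.Q : CochainComplex (ModuleCat.{u} R) ℤ ⥤ _) ⟶ DerivedCategory.Q :=
    { app := fun X => DerivedCategory.Q.map (f • 𝟙 X)
      naturality := fun X Y φ => by
        rw [← DerivedCategory.Q.map_comp, ← DerivedCategory.Q.map_comp, Linear.smul_comp,
          Linear.comp_smul, Category.id_comp, Category.comp_id] }
  let μ : 𝟭 (DerivedCategory (ModuleCat.{u} R)) ⟶ 𝟭 _ :=
    Localization.liftNatTrans DerivedCategory.Q
      (HomologicalComplex.quasiIso (ModuleCat.{u} R) (ComplexShape.up ℤ))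
      DerivedCategory.Q DerivedCategory.Q (𝟭 _) (𝟭 _) τ
  have hμ : ∀ (X : CochainComplex (ModuleCat.{u} R) ℤ),
      μ.app (DerivedCategory.Q.obj X) = DerivedCategory.Q.map (f • 𝟙 X) := fun X => by
    dsimp only [μ]
    rw [Localization.liftNatTrans_app]
    simp [τ]
  -- ghost lemma: the composite dies on `P`
  have hρ : u ≫ (b.fst ≫ φ) ≫ thetaChain R S θ (n + 1) = 0 := by
    have h0 := ghost R S θ n hP 0 (u ≫ (b.fst ≫ φ) ≫ thetaChain R S θ 0)
    rw [thetaChain_eq_chainFrom R S θ (n + 1)]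
    calc u ≫ (b.fst ≫ φ) ≫ thetaChain R S θ 0 ≫ chainFrom R S θ 0 (n + 1) ≫
          eqToHom (sObj_shift_congr R S (Nat.zero_add (n + 1)))
        = ((u ≫ (b.fst ≫ φ) ≫ thetaChain R S θ 0) ≫ chainFrom R S θ 0 (n + 1)) ≫
          eqToHom (sObj_shift_congr R S (Nat.zero_add (n + 1))) := by
          simp only [Category.assoc]
      _ = 0 := by rw [h0, zero_comp]
  obtain ⟨g, hg⟩ := Pretriangulated.Triangle.yoneda_exact₂ _ hT
    ((b.fst ≫ φ) ≫ thetaChain R S θ (n + 1)) hρ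
  change DerivedCategory.Q.obj KC ⟶ _ at g
  have hg' : (b.fst ≫ φ) ≫ thetaChain R S θ (n + 1) = v ≫ g := hg
  -- now put everything together
  have hφ2 : φ ≫ thetaChain R S θ (n + 1) = b.inl ≫ v ≫ g := by
    have h3 : φ = b.inl ≫ (b.fst ≫ φ) := by rw [← Category.assoc, b.inl_fst, Category.id_comp]
    rw [h3, Category.assoc, hg']
  have hKC : μ.app (DerivedCategory.Q.obj KC) = 0 := by rw [hμ KC, hf]
  have hnat : μ.app (DerivedCategory.Q.obj K) ≫ (b.inl ≫ v) =
      (b.inl ≫ v) ≫ μ.app (DerivedCategory.Q.obj KC) := by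
    have := μ.naturality (b.inl ≫ v)
    simpa using this.symm
  calc DerivedCategory.Q.map (f • 𝟙 K) ≫ φ ≫ thetaChain R S θ (n + 1)
      = μ.app (DerivedCategory.Q.obj K) ≫ b.inl ≫ v ≫ g := by rw [hμ K, hφ2]
    _ = (μ.app (DerivedCategory.Q.obj K) ≫ (b.inl ≫ v)) ≫ g := by simp only [Category.assoc]
    _ = ((b.inl ≫ v) ≫ μ.app (DerivedCategory.Q.obj KC)) ≫ g := by rw [hnat]
    _ = 0 := by rw [hKC, comp_zero, zero_comp]

end
end
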